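/- Let G = ℤ wr ℤ with standard generators a, b, and define c_1 = a and c_{i+1} = [c_i, b], so that c_m is the (m−1)-fold commutator [⋯[[a,b],b],⋯,b]. For every integer m ≥ 1, the subgroup H_m = ⟨b, c_m⟩ of G is isomorphic to ℤ wr ℤ, is subnormal in G, and has distortion function Δ_{H_m}^G(l) ≈ l^m. In particular, H_2 = ⟨b, [a,b]⟩ is a normal subgroup of G with quadratic distortion Δ_{H_2}^G(l) ≈ l². -/

import Mathlib

open scoped Pointwise
open scoped commutatorElement

namespace DistortionPaper

section Defs

variable (A B : Type*) [Group A] [Group B]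

/-- The base group of the restricted wreath product: finitely supported functions `B → A`
under pointwise multiplication, as a subgroup of `B → A`. -/
def WreathBase : Subgroup (B → A) where
  carrier := {f | (Function.mulSupport f).Finite}
  one_mem' := by
    simp [Function.mulSupport_one]
  mul_mem' := by
    intro f g hf hg
    exact ((Set.Finite.union hf hg).subset (Function.mulSupport_mul f g))
  inv_mem' := by
    intro f hf
    simpa [Function.mulSupport_inv] using hf

/-- The shift automorphism of the base group: `(g ∘ f)(x) = f(x * g)`. -/
def wreathShift (g : B) : WreathBase A B ≃* WreathBase A B where
  toFun f := ⟨fun x => (f : B → A) (x * g), by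
    have h : Function.mulSupport (fun x => (f : B → A) (x * g))
        ⊆ (fun x : B => x * g) ⁻¹' Function.mulSupport (f : B → A) := fun x hx => hx
    exact (Set.Finite.preimage (Set.injOn_of_injective (mul_left_injective g)) f.2).subset h⟩
  invFun f := ⟨fun x => (f : B → A) (x * g⁻¹), by
    have h : Function.mulSupport (fun x => (f : B → A) (x * g⁻¹))
        ⊆ (fun x : B => x * g⁻¹) ⁻¹' Function.mulSupport (f : B → A) := fun x hx => hx
    exact (Set.Finite.preimage (Set.injOn_of_injective (mul_left_injective g⁻¹)) f.2).subset h⟩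
  left_inv f := Subtype.ext <| funext fun x => by simp [mul_assoc]
  right_inv f := Subtype.ext <| funext fun x => by simp [mul_assoc]
  map_mul' f₁ f₂ := Subtype.ext <| funext fun _ => rfl

/-- The action of `B` on the base group by shifts. -/
def wreathAction : B →* MulAut (WreathBase A B) where
  toFun g := wreathShift A B g
  map_one' := by
    refine MulEquiv.ext fun f => Subtype.ext <| funext fun x => ?_
    show (f : B → A) (x * 1) = (f : B → A) x
    rw [mul_one]
  map_mul' g₁ g₂ := by
    refine MulEquiv.ext fun f => Subtype.ext <| funext fun x => ?_
    show (f : B → A) (x * (g₁ * g₂)) = (f : B → A) (x * g₁ * g₂)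
    rw [mul_assoc]

/-- The restricted wreath product `A wr B`. -/
abbrev WreathProduct := WreathBase A B ⋊[wreathAction A B] B

/-- The element of the base group supported at `1 ∈ B` with value `a`. -/
noncomputable def toBase (a : A) : WreathBase A B := by
  classical
  exact ⟨fun x => if x = (1 : B) then a else 1, by
    apply Set.Finite.subset (Set.finite_singleton (1 : B))
    intro x hx
    simp only [Function.mem_mulSupport] at hx
    simp only [Set.mem_singleton_iff]
    by_contra hne
    rw [if_neg hne] at hx
    exact hx rfl⟩

/-- The canonical copy of `A` in `A wr B` (functions supported at `1`). -/
noncomputable def ofPassive (a : A) : WreathProduct A B :=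
  SemidirectProduct.inl (toBase A B a)

/-- The canonical copy of `B` in `A wr B`. -/
def ofActive (g : B) : WreathProduct A B := SemidirectProduct.inr g

/-- The generating set `S ∪ T` of `A wr B` obtained from generating sets `S` of `A`
and `T` of `B`. -/
def wreathGen (S : Set A) (T : Set B) : Set (WreathProduct A B) :=
  (fun a => ofPassive A B a) '' S ∪ (fun g => ofActive A B g) '' T

end Defs

/-- Word length of `g` with respect to the set `T`: the least `n` such that `g` is a
product of `n` elements of `T ∪ T⁻¹` (and `0` if no such `n` exists). -/
noncomputable def wordLength {G : Type*} [Group G] (T : Set G) (g : G) : ℕ :=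
  sInf {n | ∃ f : Fin n → G, (∀ i, f i ∈ T ∪ T⁻¹) ∧ (List.ofFn f).prod = g}

/-- The distortion function of a subgroup `H` of `G`, where `T` is a generating set of `G`
and `S` a generating set of `H`. -/
noncomputable def distortion {G : Type*} [Group G] (T : Set G) (H : Subgroup G)
    (S : Set H) (l : ℕ) : ℕ :=
  sSup (wordLength S '' {h : H | wordLength T (h : G) ≤ l})

/-- `f ⪯ g` : there is `C > 0` with `f l ≤ C * g (C * l)` for all `l`. -/
def Dominates (f g : ℕ → ℕ) : Prop := ∃ C : ℕ, 0 < C ∧ ∀ l, f l ≤ C * g (C * l)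

/-- `f ≈ g` : `f ⪯ g` and `g ⪯ f`. -/
def DistEquiv (f g : ℕ → ℕ) : Prop := Dominates f g ∧ Dominates g f

/-- A subgroup is subnormal if there is a finite chain from it to the whole group,
each term normal in the next. -/
def IsSubnormal {G : Type*} [Group G] (H : Subgroup G) : Prop :=
  ∃ (n : ℕ) (c : ℕ → Subgroup G), c 0 = H ∧ c n = ⊤ ∧
    ∀ i < n, c i ≤ c (i + 1) ∧ ∀ x ∈ c (i + 1), ∀ h ∈ c i, x * h * x⁻¹ ∈ c i

/-- `ℤ` as a multiplicative group. -/
abbrev Mℤ := Multiplicative ℤ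

/-- The wreath product `ℤ wr ℤ`. -/
abbrev ZwrZ := WreathProduct Mℤ Mℤ

/-- The standard generator `a` of `ℤ wr ℤ` (passive copy, supported at `1`). -/
noncomputable def aZ : ZwrZ := ofPassive Mℤ Mℤ (Multiplicative.ofAdd 1)

/-- The standard generator `b` of `ℤ wr ℤ` (active copy). -/
def bZ : ZwrZ := ofActive Mℤ Mℤ (Multiplicative.ofAdd 1)


/-- The iterated commutators `c_1 = a`, `c_{i+1} = [c_i, b]` in `ℤ wr ℤ`
(here `iterC i = c_{i+1}`, i.e. `iterC 0 = a`). -/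
noncomputable def iterC : ℕ → ZwrZ
  | 0 => aZ
  | i + 1 => ⁅iterC i, bZ⁆

/-! ### Auxiliary development -/

section AuxBase

open Multiplicative SemidirectProduct

/-- Abbreviation for the base group of `ℤ wr ℤ`. -/
abbrev MB : Type := WreathBase Mℤ Mℤ

/-- Additive evaluation of a base element. -/
def ev (f : MB) (x : ℤ) : ℤ := Multiplicative.toAdd ((f : Mℤ → Mℤ) (Multiplicative.ofAdd x))

@[simp] lemma ev_mul (f g : MB) (x : ℤ) : ev (f * g) x = ev f x + ev g x := rfl

@[simp] lemma ev_one (x : ℤ) : ev (1 : MB) x = 0 := rfl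

@[simp] lemma ev_inv (f : MB) (x : ℤ) : ev f⁻¹ x = - ev f x := rfl

lemma ev_ext {f g : MB} (h : ∀ x, ev f x = ev g x) : f = g := by
  apply Subtype.ext
  funext x
  have := h (Multiplicative.toAdd x)
  simpa [ev] using this

@[simp] lemma ev_zpow (f : MB) (v : ℤ) (x : ℤ) : ev (f ^ v) x = v * ev f x := by
  have h : ((f ^ v : MB) : Mℤ → Mℤ) = ((f : Mℤ → Mℤ)) ^ v := by
    exact SubgroupClass.coe_zpow f v
  simp only [ev, h, Pi.pow_apply, toAdd_zpow, smul_eq_mul]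

lemma ev_supp_finite (f : MB) : {x : ℤ | ev f x ≠ 0}.Finite := by
  have hf : (Function.mulSupport (f : Mℤ → Mℤ)).Finite := f.2
  have : {x : ℤ | ev f x ≠ 0} ⊆ (fun x : ℤ => Multiplicative.ofAdd x) ⁻¹'
      (Function.mulSupport (f : Mℤ → Mℤ)) := by
    intro x hx
    simp only [Set.mem_preimage, Function.mem_mulSupport]
    intro hc
    exact hx (by simp [ev, hc])
  exact (Set.Finite.preimage (Set.injOn_of_injective (fun a b h => by exact h)) hf).subset this

/-- Support of a base element, as a `Finset`. -/
noncomputable def suppF (f : MB) : Finset ℤ := (ev_supp_finite f).toFinset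

@[simp] lemma mem_suppF {f : MB} {x : ℤ} : x ∈ suppF f ↔ ev f x ≠ 0 := by
  simp [suppF]

lemma ev_eq_zero_of_not_mem_suppF {f : MB} {x : ℤ} (h : x ∉ suppF f) : ev f x = 0 := by
  by_contra hc; exact h (mem_suppF.2 hc)

/-- The shift automorphism, indexed additively. -/
noncomputable def sh (s : ℤ) : MB ≃* MB := wreathAction Mℤ Mℤ (Multiplicative.ofAdd s)

@[simp] lemma ev_sh (s : ℤ) (f : MB) (x : ℤ) : ev (sh s f) x = ev f (x + s) := rfl

/-- A single-point base element. -/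
noncomputable def sing (s v : ℤ) : MB := sh (-s) (toBase Mℤ Mℤ (Multiplicative.ofAdd v))

lemma ev_toBase (v : ℤ) (x : ℤ) :
    ev (toBase Mℤ Mℤ (Multiplicative.ofAdd v)) x = if x = 0 then v else 0 := by
  simp only [ev, toBase]
  by_cases h : x = 0
  · subst h; simp
  · have h1 : Multiplicative.ofAdd x ≠ (1 : Mℤ) := by simpa using h
    rw [if_neg h1, if_neg h]
    simp

@[simp] lemma ev_sing (s v x : ℤ) : ev (sing s v) x = if x = s then v else 0 := by
  simp only [sing, ev_sh, ev_toBase]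
  by_cases h : x = s
  · simp [h]
  · rw [if_neg, if_neg h]
    omega

lemma sing_zero_val (v : ℤ) : sing 0 v = toBase Mℤ Mℤ (Multiplicative.ofAdd v) := by
  apply ev_ext; intro x; simp [ev_toBase]

lemma sing_zero (s : ℤ) : sing s 0 = 1 := by
  apply ev_ext; intro x; simp

lemma suppF_sing_subset (s v : ℤ) : suppF (sing s v) ⊆ {s} := by
  intro x hx
  simp only [mem_suppF, ev_sing] at hx
  simp only [Finset.mem_singleton]
  by_contra h
  rw [if_neg h] at hx
  exact hx rfl

/-- Induction on the support of a base element. -/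
lemma MB.induction_on (P : MB → Prop) (h1 : P 1)
    (hstep : ∀ s v f, ev f s = 0 → P f → P (sing s v * f)) : ∀ f, P f := by
  intro f
  generalize hcard : (suppF f).card = N
  induction N using Nat.strong_induction_on generalizing f with
  | _ N ih =>
    rcases Nat.eq_zero_or_pos N with hN | hN
    · subst hN
      have h0 : f = 1 := by
        apply ev_ext
        intro x
        have : x ∉ suppF f := by
          rw [Finset.card_eq_zero.1 hcard]; simp
        simpa using ev_eq_zero_of_not_mem_suppF this
      rw [h0]; exact h1
    · have hne : (suppF f).Nonempty := Finset.card_pos.1 (hcard ▸ hN)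
      obtain ⟨s, hs⟩ := hne
      set f' : MB := (sing s (ev f s))⁻¹ * f with hf'
      have hev' : ∀ x, ev f' x = if x = s then 0 else ev f x := by
        intro x
        by_cases h : x = s <;> simp [hf', h]
      have hsupp' : suppF f' = (suppF f).erase s := by
        ext x
        simp only [mem_suppF, Finset.mem_erase, hev']
        by_cases h : x = s <;> simp [h]
      have hcard' : (suppF f').card = N - 1 := by
        rw [hsupp', Finset.card_erase_of_mem hs, hcard]
      have hPf' : P f' := ih (N - 1) (by omega) f' hcard'
      have : sing s (ev f s) * f' = f := mul_inv_cancel_left _ _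
      rw [← this]
      exact hstep s (ev f s) f' (by simp [hev']) hPf'

/-- ℓ¹-norm of a base element. -/
noncomputable def l1 (f : MB) : ℕ := ∑ x ∈ suppF f, (ev f x).natAbs

/-- Additive total sum of a base element. -/
noncomputable def chi (f : MB) : ℤ := ∑ x ∈ suppF f, ev f x

lemma l1_eq_sum {f : MB} {s : Finset ℤ} (h : suppF f ⊆ s) :
    l1 f = ∑ x ∈ s, (ev f x).natAbs := by
  refine Finset.sum_subset h fun x _ hx => ?_
  rw [ev_eq_zero_of_not_mem_suppF hx]; rfl

lemma chi_eq_sum {f : MB} {s : Finset ℤ} (h : suppF f ⊆ s) :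
    chi f = ∑ x ∈ s, ev f x := by
  refine Finset.sum_subset h fun x _ hx => ?_
  exact ev_eq_zero_of_not_mem_suppF hx

@[simp] lemma l1_one : l1 (1 : MB) = 0 := by simp [l1]

@[simp] lemma chi_one : chi (1 : MB) = 0 := by simp [chi]

lemma ev_natAbs_le_l1 (f : MB) (x : ℤ) : (ev f x).natAbs ≤ l1 f := by
  by_cases h : x ∈ suppF f
  · exact Finset.single_le_sum (f := fun x => (ev f x).natAbs) (fun _ _ => Nat.zero_le _) h
  · rw [ev_eq_zero_of_not_mem_suppF h]; exact Nat.zero_le _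

lemma l1_mul_le (f g : MB) : l1 (f * g) ≤ l1 f + l1 g := by
  have hsub : suppF (f * g) ⊆ suppF f ∪ suppF g := by
    intro x hx
    simp only [mem_suppF, ev_mul] at hx
    simp only [Finset.mem_union, mem_suppF]
    by_contra h
    push_neg at h
    omega
  rw [l1_eq_sum hsub, l1_eq_sum (Finset.subset_union_left (s₂ := suppF g)),
    l1_eq_sum (Finset.subset_union_right (s₁ := suppF f))]
  rw [← Finset.sum_add_distrib]
  refine Finset.sum_le_sum fun x _ => ?_
  simp only [ev_mul]
  exact Int.natAbs_add_le _ _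

lemma chi_mul (f g : MB) : chi (f * g) = chi f + chi g := by
  have hsub : suppF (f * g) ⊆ suppF f ∪ suppF g := by
    intro x hx
    simp only [mem_suppF, ev_mul] at hx
    simp only [Finset.mem_union, mem_suppF]
    by_contra h
    push_neg at h
    omega
  rw [chi_eq_sum hsub, chi_eq_sum (Finset.subset_union_left (s₂ := suppF g)),
    chi_eq_sum (Finset.subset_union_right (s₁ := suppF f)), ← Finset.sum_add_distrib]
  exact Finset.sum_congr rfl fun x _ => rfl

lemma suppF_sh (t : ℤ) (f : MB) : suppF (sh t f) = (suppF f).image (fun x => x - t) := by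
  ext x
  simp only [mem_suppF, ev_sh, Finset.mem_image, mem_suppF]
  constructor
  · intro h; exact ⟨x + t, h, by ring⟩
  · rintro ⟨y, hy, rfl⟩; simpa using hy

lemma l1_sh (t : ℤ) (f : MB) : l1 (sh t f) = l1 f := by
  rw [l1, suppF_sh, Finset.sum_image (by intro a _ b _ h; have h' : a - t = b - t := h; omega)]
  simp only [ev_sh]
  exact Finset.sum_congr rfl fun x _ => by rw [sub_add_cancel]

lemma chi_sh (t : ℤ) (f : MB) : chi (sh t f) = chi f := by
  rw [chi, suppF_sh, Finset.sum_image (by intro a _ b _ h; have h' : a - t = b - t := h; omega)]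
  simp only [ev_sh]
  exact Finset.sum_congr rfl fun x _ => by rw [sub_add_cancel]

lemma l1_inv (f : MB) : l1 f⁻¹ = l1 f := by
  have h : suppF f⁻¹ = suppF f := by ext x; simp
  rw [l1, l1, h]
  exact Finset.sum_congr rfl fun x _ => by simp

lemma l1_sing (s v : ℤ) : l1 (sing s v) ≤ v.natAbs := by
  rw [l1_eq_sum (suppF_sing_subset s v)]
  simp

lemma chi_sing (s v : ℤ) : chi (sing s v) = v := by
  rw [chi_eq_sum (suppF_sing_subset s v)]
  simp

end AuxBase

section AuxWord

variable {G : Type*} [Group G] {G₂ : Type*} [Group G₂]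

/-- `L` is a word over the symmetrized alphabet `T ∪ T⁻¹`. -/
def IsWord (T : Set G) (L : List G) : Prop := ∀ y ∈ L, y ∈ T ∪ T⁻¹

/-- `g` is representable as a word over `T ∪ T⁻¹`. -/
def Rep (T : Set G) (g : G) : Prop := ∃ L : List G, IsWord T L ∧ L.prod = g

lemma wordLength_le {T : Set G} {L : List G} {g : G} (hL : IsWord T L) (hprod : L.prod = g) :
    wordLength T g ≤ L.length := by
  apply Nat.sInf_le
  exact ⟨L.get, fun i => hL _ (L.get_mem i), by rw [List.ofFn_get]; exact hprod⟩

lemma exists_word {T : Set G} {g : G} (h : Rep T g) :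
    ∃ L : List G, IsWord T L ∧ L.prod = g ∧ L.length = wordLength T g := by
  obtain ⟨L₀, hL₀, hprod₀⟩ := h
  have hne : {n | ∃ f : Fin n → G, (∀ i, f i ∈ T ∪ T⁻¹) ∧ (List.ofFn f).prod = g}.Nonempty :=
    ⟨L₀.length, L₀.get, fun i => hL₀ _ (L₀.get_mem i), by rw [List.ofFn_get]; exact hprod₀⟩
  obtain ⟨f, hf, hprod⟩ := Nat.sInf_mem hne
  refine ⟨List.ofFn f, fun y hy => ?_, hprod, by simp [wordLength]⟩
  obtain ⟨i, rfl⟩ := List.mem_ofFn.1 hy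
  exact hf i

lemma rep_one {T : Set G} : Rep T (1 : G) := ⟨[], by simp [IsWord], rfl⟩

lemma rep_mem {T : Set G} {g : G} (h : g ∈ T) : Rep T g :=
  ⟨[g], by simpa [IsWord] using Or.inl h, by simp⟩

lemma rep_mul {T : Set G} {g h : G} (hg : Rep T g) (hh : Rep T h) : Rep T (g * h) := by
  obtain ⟨L₁, h₁, hp₁⟩ := hg
  obtain ⟨L₂, h₂, hp₂⟩ := hh
  exact ⟨L₁ ++ L₂, fun y hy => by
    rcases List.mem_append.1 hy with hy | hy
    exacts [h₁ y hy, h₂ y hy], by rw [List.prod_append, hp₁, hp₂]⟩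

lemma isWord_inv_reverse {T : Set G} {L : List G} (hL : IsWord T L) :
    IsWord T (L.reverse.map Inv.inv) := by
  intro y hy
  obtain ⟨z, hz, rfl⟩ := List.mem_map.1 hy
  have hz' := hL z (List.mem_reverse.1 hz)
  rcases hz' with h | h
  · exact Or.inr (by simpa [Set.mem_inv] using h)
  · exact Or.inl (by simpa [Set.mem_inv] using h)

lemma prod_inv_reverse' (L : List G) : (L.reverse.map Inv.inv).prod = L.prod⁻¹ := by
  induction L with
  | nil => simp
  | cons x xs ih =>
    simp only [List.reverse_cons, List.map_append, List.prod_append, List.map_cons,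
      List.prod_cons, List.map_nil, List.prod_nil, ih, List.prod_cons, mul_one, mul_inv_rev]

lemma rep_inv {T : Set G} {g : G} (hg : Rep T g) : Rep T g⁻¹ := by
  obtain ⟨L, hL, hp⟩ := hg
  exact ⟨L.reverse.map Inv.inv, isWord_inv_reverse hL, by rw [prod_inv_reverse', hp]⟩

lemma rep_zpow {T : Set G} {g : G} (hg : Rep T g) (k : ℤ) : Rep T (g ^ k) := by
  have hn : ∀ n : ℕ, Rep T (g ^ n) := by
    intro n
    induction n with
    | zero => simpa using rep_one
    | succ n ih => rw [pow_succ]; exact rep_mul ih hg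
  rcases Int.eq_nat_or_neg k with ⟨n, rfl | rfl⟩
  · simpa using hn n
  · rw [zpow_neg, zpow_natCast]
    exact rep_inv (hn n)

lemma rep_of_mem_closure {T : Set G} {g : G} (h : g ∈ Subgroup.closure T) : Rep T g := by
  have h' : g ∈ Submonoid.closure (T ∪ T⁻¹) := by
    have := Subgroup.closure_toSubmonoid T
    rw [← Subgroup.mem_toSubmonoid, this] at h
    exact h
  obtain ⟨L, hL, hp⟩ := Submonoid.exists_list_of_mem_closure h'
  exact ⟨L, hL, hp⟩

lemma rep_all_of_closure_eq_top {T : Set G} (h : Subgroup.closure T = ⊤) (g : G) : Rep T g :=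
  rep_of_mem_closure (h ▸ Subgroup.mem_top g)

@[simp] lemma wordLength_one (T : Set G) : wordLength T (1 : G) = 0 :=
  Nat.le_zero.1 (wordLength_le (L := []) (by simp [IsWord]) rfl)

lemma wordLength_eq_zero {T : Set G} {g : G} (hg : Rep T g) (h : wordLength T g = 0) :
    g = 1 := by
  obtain ⟨L, _, hp, hlen⟩ := exists_word hg
  rw [h] at hlen
  rw [← hp, List.length_eq_zero_iff.1 hlen]
  rfl

lemma wordLength_mul_le {T : Set G} {g h : G} (hg : Rep T g) (hh : Rep T h) :
    wordLength T (g * h) ≤ wordLength T g + wordLength T h := by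
  obtain ⟨L₁, h₁, hp₁, hl₁⟩ := exists_word hg
  obtain ⟨L₂, h₂, hp₂, hl₂⟩ := exists_word hh
  have := wordLength_le (T := T) (L := L₁ ++ L₂) (g := g * h)
    (fun y hy => by rcases List.mem_append.1 hy with hy | hy; exacts [h₁ y hy, h₂ y hy])
    (by rw [List.prod_append, hp₁, hp₂])
  simpa [hl₁, hl₂] using this

lemma wordLength_inv_le {T : Set G} {g : G} (hg : Rep T g) :
    wordLength T g⁻¹ ≤ wordLength T g := by
  obtain ⟨L, hL, hp, hl⟩ := exists_word hg
  have := wordLength_le (isWord_inv_reverse hL) (by rw [prod_inv_reverse', hp])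
  simpa [hl] using this

lemma wordLength_zpow_le {T : Set G} {g : G} (hg : g ∈ T) (k : ℤ) :
    wordLength T (g ^ k) ≤ k.natAbs := by
  have hn : ∀ n : ℕ, wordLength T (g ^ n) ≤ n := by
    intro n
    refine wordLength_le (T := T) (L := List.replicate n g) ?_ (by simp) |>.trans (by simp)
    intro y hy
    rw [List.eq_of_mem_replicate hy]
    exact Or.inl hg
  rcases Int.eq_nat_or_neg k with ⟨n, rfl | rfl⟩
  · simpa using hn n
  · rw [zpow_neg, zpow_natCast]
    have h1 : wordLength T (g ^ n)⁻¹ ≤ wordLength T (g ^ n) := by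
      refine wordLength_inv_le ?_
      have := rep_zpow (rep_mem hg) (n : ℤ)
      simpa using this
    calc wordLength T ((g:G) ^ (n:ℕ))⁻¹ ≤ wordLength T (g ^ n) := h1
      _ ≤ n := hn n
      _ = (-(n:ℤ)).natAbs := by simp

/-- Pushing a word length through a homomorphism mapping generators to generators. -/
lemma wordLength_map_le {T : Set G} {T₂ : Set G₂} (φ : G →* G₂)
    (hT : ∀ t ∈ T, φ t ∈ T₂ ∪ T₂⁻¹) {g : G} (hg : Rep T g) :
    wordLength T₂ (φ g) ≤ wordLength T g := by
  obtain ⟨L, hL, hp, hl⟩ := exists_word hg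
  have hword : IsWord T₂ (L.map φ) := by
    intro y hy
    obtain ⟨z, hz, rfl⟩ := List.mem_map.1 hy
    rcases hL z hz with h | h
    · exact hT z h
    · rcases hT z⁻¹ (by simpa [Set.mem_inv] using h) with h' | h'
      · exact Or.inr (by simpa [Set.mem_inv] using h')
      · exact Or.inl (by simpa [Set.mem_inv] using h')
  have := wordLength_le hword (by rw [List.prod_hom L φ, hp])
  simpa [hl] using this

lemma rep_map {T : Set G} {T₂ : Set G₂} (φ : G →* G₂)
    (hT : ∀ t ∈ T, φ t ∈ T₂ ∪ T₂⁻¹) {g : G} (hg : Rep T g) : Rep T₂ (φ g) := by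
  obtain ⟨L, hL, hp⟩ := hg
  refine ⟨L.map φ, ?_, by rw [List.prod_hom L φ, hp]⟩
  intro y hy
  obtain ⟨z, hz, rfl⟩ := List.mem_map.1 hy
  rcases hL z hz with h | h
  · exact hT z h
  · rcases hT z⁻¹ (by simpa [Set.mem_inv] using h) with h' | h'
    · exact Or.inr (by simpa [Set.mem_inv] using h')
    · exact Or.inl (by simpa [Set.mem_inv] using h')

/-- Lower bound on word length via a homomorphism to `ℤ`. -/
lemma natAbs_le_wordLength {T : Set G} (χ : G →* Multiplicative ℤ)
    (hT : ∀ t ∈ T, (Multiplicative.toAdd (χ t)).natAbs ≤ 1) {g : G} (hg : Rep T g) :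
    (Multiplicative.toAdd (χ g)).natAbs ≤ wordLength T g := by
  obtain ⟨L, hL, hp, hl⟩ := exists_word hg
  rw [← hl, ← hp]
  clear hl hp hg
  induction L with
  | nil => simp
  | cons x xs ih =>
    have hx : (Multiplicative.toAdd (χ x)).natAbs ≤ 1 := by
      rcases hL x (List.mem_cons_self) with h | h
      · exact hT x h
      · have := hT x⁻¹ (by simpa [Set.mem_inv] using h)
        simpa using this
    have hxs := ih fun y hy => hL y (List.mem_cons_of_mem _ hy)
    calc (Multiplicative.toAdd (χ (x :: xs).prod)).natAbs
        = (Multiplicative.toAdd (χ x) + Multiplicative.toAdd (χ xs.prod)).natAbs := by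
          rw [List.prod_cons, map_mul]; rfl
      _ ≤ (Multiplicative.toAdd (χ x)).natAbs + (Multiplicative.toAdd (χ xs.prod)).natAbs :=
          Int.natAbs_add_le _ _
      _ ≤ 1 + xs.length := Nat.add_le_add hx hxs
      _ = (x :: xs).length := by simp [Nat.add_comm]

/-- Word length of a product of a list is at most `C` times its length, if every entry
has word length at most `C`. -/
lemma wordLength_list_prod_le {T : Set G} (hrep : ∀ g : G, Rep T g) {C : ℕ} {L : List G}
    (h : ∀ y ∈ L, wordLength T y ≤ C) : wordLength T L.prod ≤ C * L.length := by
  induction L with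
  | nil => simp
  | cons x xs ih =>
    rw [List.prod_cons]
    calc wordLength T (x * xs.prod) ≤ wordLength T x + wordLength T xs.prod :=
          wordLength_mul_le (hrep x) (hrep xs.prod)
      _ ≤ C + C * xs.length := Nat.add_le_add (h x (List.mem_cons_self))
          (ih fun y hy => h y (List.mem_cons_of_mem _ hy))
      _ = C * (x :: xs).length := by rw [List.length_cons, Nat.mul_succ, Nat.add_comm]

/-- Word lengths with respect to two generating sets are linearly comparable. -/
lemma exists_comparison {T T' : Set G} (hrep : ∀ g : G, Rep T g) (hT' : T'.Finite) :
    ∃ C : ℕ, 0 < C ∧ ∀ g : G, Rep T' g → wordLength T g ≤ C * wordLength T' g := by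
  have hfin : ((T' ∪ T'⁻¹) : Set G).Finite := hT'.union hT'.inv
  have hbdd : BddAbove (wordLength T '' (T' ∪ T'⁻¹)) := (hfin.image _).bddAbove
  obtain ⟨C, hC⟩ := hbdd
  refine ⟨C + 1, Nat.succ_pos C, fun g hg => ?_⟩
  obtain ⟨L, hL, hp, hl⟩ := exists_word hg
  rw [← hl, ← hp]
  refine wordLength_list_prod_le hrep fun y hy => ?_
  exact le_trans (hC (Set.mem_image_of_mem _ (hL y hy))) (Nat.le_succ C)

/-- Balls with respect to a finite generating set are finite. -/
lemma ball_finite {T : Set G} (hT : T.Finite) (hrep : ∀ g : G, Rep T g) (l : ℕ) :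
    {g : G | wordLength T g ≤ l}.Finite := by
  classical
  have hK : ((T ∪ T⁻¹) : Set G).Finite := hT.union hT.inv
  haveI : Finite ↥(T ∪ T⁻¹ : Set G) := hK.to_subtype
  have hlists : {L : List ↥(T ∪ T⁻¹ : Set G) | L.length ≤ l}.Finite := List.finite_length_le _ l
  have himage : {g : G | wordLength T g ≤ l} ⊆
      (fun L : List ↥(T ∪ T⁻¹ : Set G) => (L.map Subtype.val).prod) ''
        {L | L.length ≤ l} := by
    intro g hg
    obtain ⟨L, hL, hp, hlen⟩ := exists_word (hrep g)
    refine ⟨L.attach.map (fun x => ⟨x.1, hL x.1 x.2⟩), ?_, ?_⟩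
    · simpa using hlen.le.trans hg
    · show ((L.attach.map fun x => (⟨x.1, hL x.1 x.2⟩ : ↥(T ∪ T⁻¹ : Set G))).map Subtype.val).prod = g
      rw [List.map_map]
      have h2 : (L.attach.map (Subtype.val ∘ fun x => (⟨x.1, hL x.1 x.2⟩ : ↥(T ∪ T⁻¹ : Set G)))) = L := by
        simpa using List.attach_map_subtype_val L
      rw [h2, hp]
  exact (hlists.image _).subset himage

end AuxWord

section AuxZ

open Multiplicative SemidirectProduct

/-- The homomorphism `f ↦ f ⋅ (shift f)⁻¹` on the base group. -/
noncomputable def Psib : MB →* MB where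
  toFun f := f * (sh 1 f)⁻¹
  map_one' := by apply ev_ext; intro x; simp
  map_mul' f g := by apply ev_ext; intro x; simp; ring

@[simp] lemma ev_Psib (f : MB) (x : ℤ) : ev (Psib f) x = ev f x - ev f (x + 1) := by
  show ev (f * (sh 1 f)⁻¹) x = _
  simp; ring

lemma Psib_sh (t : ℤ) (f : MB) : Psib (sh t f) = sh t (Psib f) := by
  apply ev_ext; intro x
  simp only [ev_Psib, ev_sh]
  ring_nf

lemma eq_one_of_ev_const {p : MB} (h : ∀ x, ev p x = ev p (x + 1)) : p = 1 := by
  have hstep : ∀ (x : ℤ) (n : ℕ), ev p x = ev p (x + n) := by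
    intro x n
    induction n with
    | zero => simp
    | succ n ih => rw [ih, h (x + n)]; congr 1; push_cast; ring
  obtain ⟨N, hN⟩ := (suppF p).finite_toSet.bddAbove
  apply ev_ext; intro x
  simp only [ev_one]
  have key : ev p (x + ((N + 1 - x).toNat : ℤ)) = 0 := by
    apply ev_eq_zero_of_not_mem_suppF
    intro hc
    have := hN (Finset.mem_coe.2 hc)
    omega
  rw [hstep x ((N + 1 - x).toNat), key]

lemma Psib_injective : Function.Injective Psib := by
  intro f g hfg
  have h : Psib (f * g⁻¹) = 1 := by rw [map_mul, map_inv, hfg]; group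
  have hconst : ∀ x, ev (f * g⁻¹) x = ev (f * g⁻¹) (x + 1) := by
    intro x
    have := congrArg (fun q => ev q x) h
    simp only [ev_Psib, ev_one] at this
    omega
  have h2 : f * g⁻¹ = 1 := eq_one_of_ev_const hconst
  exact mul_inv_eq_one.1 h2

/-- Iterates of `Psib`. -/
noncomputable def PsibPow : ℕ → (MB →* MB)
  | 0 => MonoidHom.id MB
  | n + 1 => (PsibPow n).comp Psib

lemma PsibPow_succ' (n : ℕ) (f : MB) : PsibPow (n + 1) f = Psib (PsibPow n f) := by
  induction n generalizing f with
  | zero => rfl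
  | succ n ih =>
    show PsibPow (n + 1) (Psib f) = _
    rw [ih (Psib f)]
    rfl

lemma PsibPow_sh (n : ℕ) (t : ℤ) (f : MB) : PsibPow n (sh t f) = sh t (PsibPow n f) := by
  induction n generalizing f with
  | zero => rfl
  | succ n ih =>
    show PsibPow n (Psib (sh t f)) = _
    rw [Psib_sh, ih (Psib f)]
    rfl

lemma PsibPow_injective (n : ℕ) : Function.Injective (PsibPow n) := by
  induction n with
  | zero => exact fun a b h => h
  | succ n ih => exact fun a b h => Psib_injective (ih h)

lemma wreathAction_eq_sh (g : Mℤ) :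
    (wreathAction Mℤ Mℤ g : MB ≃* MB) = sh (Multiplicative.toAdd g) := rfl

/-- The level-`n` embedding `ℤ wr ℤ →* ℤ wr ℤ`. -/
noncomputable def Phid (n : ℕ) : ZwrZ →* ZwrZ :=
  SemidirectProduct.map (PsibPow n) (MonoidHom.id Mℤ)
    (fun g => MonoidHom.ext fun f => by
      show PsibPow n (wreathAction Mℤ Mℤ g f) = wreathAction Mℤ Mℤ g (PsibPow n f)
      exact PsibPow_sh n (Multiplicative.toAdd g) f)

@[simp] lemma Phid_left (n : ℕ) (x : ZwrZ) : (Phid n x).left = PsibPow n x.left := rfl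

@[simp] lemma Phid_right (n : ℕ) (x : ZwrZ) : (Phid n x).right = x.right := rfl

lemma Phid_inl (n : ℕ) (f : MB) : Phid n (SemidirectProduct.inl f)
    = SemidirectProduct.inl (PsibPow n f) := SemidirectProduct.ext rfl rfl

lemma Phid_injective (n : ℕ) : Function.Injective (Phid n) := by
  intro x y h
  have h1 : x.left = y.left := PsibPow_injective n (congrArg (fun z : ZwrZ => z.left) h)
  have h2 := congrArg (fun z : ZwrZ => z.right) h
  exact SemidirectProduct.ext h1 h2

lemma Phid_zero (x : ZwrZ) : Phid 0 x = x := SemidirectProduct.ext rfl rfl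

lemma Phid_succ (n : ℕ) (x : ZwrZ) : Phid (n + 1) x = Phid n (Phid 1 x) :=
  SemidirectProduct.ext rfl rfl

/-- The summation character on the base. -/
noncomputable def chib : MB →* Multiplicative ℤ where
  toFun f := Multiplicative.ofAdd (chi f)
  map_one' := by simp
  map_mul' f g := by
    simp only [chi_mul]
    rfl

/-- The summation character on `ℤ wr ℤ`. -/
noncomputable def chihom : ZwrZ →* Multiplicative ℤ :=
  SemidirectProduct.lift chib 1
    (fun g => MonoidHom.ext fun f => by
      show chib (wreathAction Mℤ Mℤ g f) = _
      show Multiplicative.ofAdd (chi (sh (Multiplicative.toAdd g) f)) = _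
      rw [chi_sh]
      show _ = (1 : Mℤ) * Multiplicative.ofAdd (chi f) * ((1:Mℤ))⁻¹
      simp)

@[simp] lemma chihom_inl (f : MB) : chihom (inl f) = Multiplicative.ofAdd (chi f) :=
  SemidirectProduct.lift_inl _ _ _ f

@[simp] lemma chihom_inr (g : Mℤ) : chihom (inr g) = 1 :=
  SemidirectProduct.lift_inr _ _ _ g

lemma chihom_apply (x : ZwrZ) : chihom x = Multiplicative.ofAdd (chi x.left) := by
  rw [← inl_left_mul_inr_right x, map_mul, chihom_inl, chihom_inr, mul_one]
  simp

/-- `aZ` as `inl` of a single. -/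
lemma aZ_eq : aZ = inl (sing 0 1) := by rw [sing_zero_val]; rfl

lemma bZ_eq : bZ = inr (Multiplicative.ofAdd 1) := rfl

lemma bZ_zpow (k : ℤ) : bZ ^ k = inr (Multiplicative.ofAdd k) := by
  rw [bZ_eq, ← map_zpow]
  congr 1
  rw [← ofAdd_zsmul, smul_eq_mul, mul_one]

lemma sing_zpow (v : ℤ) : sing 0 1 ^ v = sing 0 v := by
  apply ev_ext; intro x
  simp only [ev_zpow, ev_sing]
  by_cases h : x = 0 <;> simp [h]

lemma aZ_zpow (v : ℤ) : aZ ^ v = inl (sing 0 v) := by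
  rw [aZ_eq, ← map_zpow, sing_zpow]

lemma sing_inv (s v : ℤ) : (sing s v)⁻¹ = sing s (-v) := by
  apply ev_ext; intro x
  simp only [ev_inv, ev_sing]
  by_cases h : x = s <;> simp [h]

lemma inl_sing_eq (s v : ℤ) : inl (sing s v) = bZ ^ (-s) * aZ ^ v * bZ ^ s := by
  rw [bZ_zpow, bZ_zpow, aZ_zpow]
  have h : sing s v = wreathAction Mℤ Mℤ (Multiplicative.ofAdd (-s)) (sing 0 v) := by
    have h2 : wreathAction Mℤ Mℤ (Multiplicative.ofAdd (-s)) (sing 0 v) = sh (-s) (sing 0 v) := rfl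
    rw [h2]
    apply ev_ext; intro x
    simp only [ev_sh, ev_sing]
    by_cases hx : x = s <;> simp [hx] <;> omega
  rw [h, inl_aut]
  congr 2
  rw [← ofAdd_neg, neg_neg]

/-- The standard generating set of `ℤ wr ℤ`. -/
def Tstd : Set ZwrZ := {aZ, bZ}

lemma Tstd_finite : Tstd.Finite := (Set.finite_singleton bZ).insert aZ

lemma aZ_mem_Tstd : aZ ∈ Tstd := Or.inl rfl
lemma bZ_mem_Tstd : bZ ∈ Tstd := Or.inr rfl

lemma rep_inl_sing (s v : ℤ) : Rep Tstd (inl (sing s v)) := by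
  rw [inl_sing_eq]
  exact rep_mul (rep_mul (rep_zpow (rep_mem bZ_mem_Tstd) _)
    (rep_zpow (rep_mem aZ_mem_Tstd) _)) (rep_zpow (rep_mem bZ_mem_Tstd) _)

lemma rep_inl (f : MB) : Rep Tstd (inl f) := by
  induction f using MB.induction_on with
  | h1 => simpa using rep_one
  | hstep s v f _ ih =>
    rw [map_mul]
    exact rep_mul (rep_inl_sing s v) ih

lemma rep_std (g : ZwrZ) : Rep Tstd g := by
  rw [← inl_left_mul_inr_right g]
  refine rep_mul (rep_inl g.left) ?_
  have : inr g.right = bZ ^ (Multiplicative.toAdd g.right) := by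
    rw [bZ_zpow]; simp
  rw [this]
  exact rep_zpow (rep_mem bZ_mem_Tstd) _

lemma closure_Tstd : Subgroup.closure Tstd = ⊤ := by
  rw [eq_top_iff]
  intro g _
  obtain ⟨L, hL, hp⟩ := rep_std g
  rw [← hp]
  refine Subgroup.list_prod_mem _ fun y hy => ?_
  rcases hL y hy with h | h
  · exact Subgroup.subset_closure h
  · have : y⁻¹ ∈ Subgroup.closure Tstd := Subgroup.subset_closure (by simpa [Set.mem_inv] using h)
    simpa using Subgroup.inv_mem _ this

end AuxZ

section AuxBounds

open Multiplicative SemidirectProduct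

lemma mul_left_eval (y w : ZwrZ) (x : ℤ) :
    ev (y * w).left x = ev y.left x + ev w.left (x + Multiplicative.toAdd y.right) := by
  have h : (y * w).left = y.left * sh (Multiplicative.toAdd y.right) w.left := rfl
  rw [h, ev_mul, ev_sh]

lemma gen_form {y : ZwrZ} (hy : y ∈ Tstd ∪ Tstd⁻¹) :
    ∃ e₁ e₂ : ℤ, e₁.natAbs ≤ 1 ∧ e₂.natAbs ≤ 1 ∧ y.left = sing 0 e₁ ∧
      y.right = Multiplicative.ofAdd e₂ := by
  have hbl : (1 : MB) = sing 0 0 := (sing_zero 0).symm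
  rcases hy with hy | hy
  · simp only [Tstd, Set.mem_insert_iff, Set.mem_singleton_iff] at hy
    rcases hy with rfl | rfl
    · exact ⟨1, 0, by norm_num, by norm_num, by rw [aZ_eq]; rfl, rfl⟩
    · exact ⟨0, 1, by norm_num, by norm_num, by rw [bZ_eq, ← hbl]; rfl, rfl⟩
  · rw [Set.mem_inv] at hy
    simp only [Tstd, Set.mem_insert_iff, Set.mem_singleton_iff] at hy
    rcases hy with h | h
    · have hy' : y = aZ⁻¹ := by rw [← h, inv_inv]
      subst hy'
      refine ⟨-1, 0, by norm_num, by norm_num, ?_, rfl⟩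
      rw [aZ_eq, ← map_inv, sing_inv]
      rfl
    · have hy' : y = bZ⁻¹ := by rw [← h, inv_inv]
      subst hy'
      refine ⟨0, -1, by norm_num, by norm_num, by rw [bZ_eq, ← map_inv, ← hbl]; rfl, ?_⟩
      rw [bZ_eq, ← map_inv, ← ofAdd_neg]
      rfl

lemma word_bound {L : List ZwrZ} (hL : IsWord Tstd L) :
    (∀ x : ℤ, ev (L.prod).left x ≠ 0 → x.natAbs ≤ L.length) ∧
    (Multiplicative.toAdd (L.prod).right).natAbs ≤ L.length ∧
    l1 (L.prod).left ≤ L.length := by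
  induction L with
  | nil =>
    refine ⟨fun x hx => ?_, by simp, by simp⟩
    exact absurd (show ev ([] : List ZwrZ).prod.left x = 0 from rfl) hx
  | cons y xs ih =>
    obtain ⟨hsupp, hright, hl1⟩ := ih fun z hz => hL z (List.mem_cons_of_mem _ hz)
    obtain ⟨e₁, e₂, he₁, he₂, hyl, hyr⟩ := gen_form (hL y (List.mem_cons_self))
    have hleft : (y :: xs).prod.left = sing 0 e₁ * sh e₂ xs.prod.left := by
      rw [List.prod_cons]
      have : (y * xs.prod).left = y.left * sh (Multiplicative.toAdd y.right) xs.prod.left := rfl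
      rw [this, hyl, hyr]
      rfl
    have hright' : (y :: xs).prod.right = Multiplicative.ofAdd e₂ * xs.prod.right := by
      rw [List.prod_cons]
      have : (y * xs.prod).right = y.right * xs.prod.right := rfl
      rw [this, hyr]
    refine ⟨fun x hx => ?_, ?_, ?_⟩
    · rw [hleft, ev_mul, ev_sing, ev_sh] at hx
      simp only [List.length_cons]
      by_cases hw : ev xs.prod.left (x + e₂) = 0
      · rw [hw, add_zero] at hx
        have : x = 0 := by by_contra hc; rw [if_neg hc] at hx; exact hx rfl
        omega
      · have := hsupp _ hw
        omega
    · rw [hright', toAdd_mul]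
      simp only [List.length_cons]
      have : (Multiplicative.toAdd (Multiplicative.ofAdd e₂)) = e₂ := rfl
      rw [this]
      omega
    · rw [hleft]
      refine le_trans (l1_mul_le _ _) ?_
      rw [l1_sh]
      simp only [List.length_cons]
      have := l1_sing 0 e₁
      omega

lemma bounds_of_wordLength {g : ZwrZ} {l : ℕ} (h : wordLength Tstd g ≤ l) :
    (∀ x : ℤ, ev g.left x ≠ 0 → x.natAbs ≤ l) ∧
    (Multiplicative.toAdd g.right).natAbs ≤ l ∧ l1 g.left ≤ l := by
  obtain ⟨L, hL, hp, hlen⟩ := exists_word (rep_std g)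
  have hll : L.length ≤ l := hlen.le.trans h
  obtain ⟨h1, h2, h3⟩ := word_bound hL
  rw [hp] at h1 h2 h3
  exact ⟨fun x hx => (h1 x hx).trans hll, h2.trans hll, h3.trans hll⟩

lemma wl_inr_le (k : ℤ) : wordLength Tstd (inr (Multiplicative.ofAdd k)) ≤ k.natAbs := by
  rw [← bZ_zpow]
  exact wordLength_zpow_le bZ_mem_Tstd k

lemma wl_inl_sing_le (s v : ℤ) :
    wordLength Tstd (inl (sing s v)) ≤ 2 * s.natAbs + v.natAbs := by
  rw [inl_sing_eq]
  have h1 := wordLength_zpow_le (T := Tstd) bZ_mem_Tstd (-s)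
  have h2 := wordLength_zpow_le (T := Tstd) aZ_mem_Tstd v
  have h3 := wordLength_zpow_le (T := Tstd) bZ_mem_Tstd s
  have h4 := wordLength_mul_le (rep_zpow (rep_mem bZ_mem_Tstd) (-s)) (rep_zpow (rep_mem aZ_mem_Tstd) v)
  have h5 := wordLength_mul_le (rep_mul (rep_zpow (rep_mem bZ_mem_Tstd) (-s))
    (rep_zpow (rep_mem aZ_mem_Tstd) v)) (rep_zpow (rep_mem bZ_mem_Tstd) s)
  have : (-s).natAbs = s.natAbs := Int.natAbs_neg s
  omega

lemma wl_inl_le (f : MB) :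
    wordLength Tstd (inl f) ≤ ∑ x ∈ suppF f, (2 * x.natAbs + (ev f x).natAbs) := by
  induction f using MB.induction_on with
  | h1 => simp
  | hstep s v f hf ih =>
    by_cases hv : v = 0
    · subst hv
      rw [sing_zero, one_mul]
      exact ih
    · have hs_not : s ∉ suppF f := by simp [hf]
      have hev : ∀ x, ev (sing s v * f) x = (if x = s then v else 0) + ev f x := by
        intro x; rw [ev_mul, ev_sing]
      have hsupp : suppF (sing s v * f) = insert s (suppF f) := by
        ext x
        simp only [mem_suppF, hev, Finset.mem_insert, mem_suppF]
        by_cases hx : x = s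
        · subst hx; simp [hf, hv]
        · simp [hx]
      rw [hsupp, Finset.sum_insert hs_not]
      have hsum : ∀ x ∈ suppF f, 2 * x.natAbs + (ev (sing s v * f) x).natAbs
          = 2 * x.natAbs + (ev f x).natAbs := by
        intro x hx
        have hx' : x ≠ s := fun hc => hs_not (hc ▸ hx)
        rw [hev, if_neg hx', zero_add]
      rw [Finset.sum_congr rfl hsum]
      have hvs : (ev (sing s v * f) s).natAbs = v.natAbs := by rw [hev, if_pos rfl, hf, add_zero]
      rw [hvs]
      rw [map_mul]
      refine le_trans (wordLength_mul_le (rep_inl_sing s v) (rep_inl f)) ?_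
      exact Nat.add_le_add (wl_inl_sing_le s v) ih

lemma wl_pair_le (g : ZwrZ) :
    wordLength Tstd g ≤ wordLength Tstd (inl g.left) + (Multiplicative.toAdd g.right).natAbs := by
  have hrep : Rep Tstd (inr g.right : ZwrZ) := by
    have h : (inr g.right : ZwrZ) = bZ ^ (Multiplicative.toAdd g.right) := by rw [bZ_zpow]; simp
    rw [h]; exact rep_zpow (rep_mem bZ_mem_Tstd) _
  have h2 : wordLength Tstd (inr g.right : ZwrZ) ≤ (Multiplicative.toAdd g.right).natAbs := by
    have h : (inr g.right : ZwrZ) = inr (Multiplicative.ofAdd (Multiplicative.toAdd g.right)) := by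
      simp
    rw [h]; exact wl_inr_le _
  calc wordLength Tstd g = wordLength Tstd (inl g.left * inr g.right) := by
        rw [inl_left_mul_inr_right]
    _ ≤ wordLength Tstd (inl g.left) + wordLength Tstd (inr g.right : ZwrZ) :=
        wordLength_mul_le (rep_inl g.left) hrep
    _ ≤ _ := Nat.add_le_add le_rfl h2

end AuxBounds

section AuxPsum

open Multiplicative SemidirectProduct

/-- Partial sums of the coefficients of a base element. -/
noncomputable def psum (f : MB) (x : ℤ) : ℤ :=
  ∑ y ∈ (suppF f).filter (fun y => x ≤ y), ev f y

lemma psum_rec (f : MB) (x : ℤ) : psum f x = ev f x + psum f (x + 1) := by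
  classical
  have hsplit : (suppF f).filter (fun y => x ≤ y)
      = ((suppF f).filter (fun y => y = x)) ∪ ((suppF f).filter (fun y => x + 1 ≤ y)) := by
    ext y
    simp only [Finset.mem_filter, Finset.mem_union]
    constructor
    · rintro ⟨hy, hxy⟩
      by_cases h : y = x
      · exact Or.inl ⟨hy, h⟩
      · exact Or.inr ⟨hy, by omega⟩
    · rintro (⟨hy, h⟩ | ⟨hy, h⟩) <;> exact ⟨hy, by omega⟩
  have hdisj : Disjoint ((suppF f).filter (fun y => y = x))
      ((suppF f).filter (fun y => x + 1 ≤ y)) := by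
    rw [Finset.disjoint_left]
    rintro y hy hz
    simp only [Finset.mem_filter] at hy hz
    omega
  rw [psum, hsplit, Finset.sum_union hdisj]
  congr 1
  by_cases hx : x ∈ suppF f
  · have h1 : (suppF f).filter (fun y => y = x) = {x} := by
      ext y
      simp only [Finset.mem_filter, Finset.mem_singleton]
      exact ⟨fun h => h.2, fun h => ⟨h ▸ hx, h⟩⟩
    rw [h1, Finset.sum_singleton]
  · have h1 : (suppF f).filter (fun y => y = x) = ∅ := by
      ext y
      simp only [Finset.mem_filter, Finset.notMem_empty, iff_false, not_and]
      rintro hy rfl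
      exact hx hy
    rw [h1, Finset.sum_empty, ev_eq_zero_of_not_mem_suppF hx]

lemma psum_zero_of_big {f : MB} {x : ℤ} (h : ∀ y ∈ suppF f, y < x) : psum f x = 0 := by
  rw [psum]
  have h1 : (suppF f).filter (fun y => x ≤ y) = ∅ := by
    ext y
    simp only [Finset.mem_filter, Finset.notMem_empty, iff_false, not_and, not_le]
    exact fun hy => h y hy
  rw [h1, Finset.sum_empty]

lemma psum_eq_chi_of_small {f : MB} {x : ℤ} (h : ∀ y ∈ suppF f, x ≤ y) : psum f x = chi f := by
  rw [psum, Finset.filter_true_of_mem h, chi]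

lemma psum_natAbs_le (f : MB) (x : ℤ) : (psum f x).natAbs ≤ l1 f := by
  have h1 : |psum f x| ≤ ∑ y ∈ (suppF f).filter (fun y => x ≤ y), |ev f y| :=
    Finset.abs_sum_le_sum_abs _ _
  have h2 : ∑ y ∈ (suppF f).filter (fun y => x ≤ y), |ev f y| ≤ ∑ y ∈ suppF f, |ev f y| :=
    Finset.sum_le_sum_of_subset_of_nonneg (Finset.filter_subset _ _)
      (fun _ _ _ => abs_nonneg _)
  have h3 : ∑ y ∈ suppF f, |ev f y| = ((l1 f : ℤ)) := by
    rw [l1]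
    push_cast
    rfl
  rw [h3] at h2
  have h4 : |psum f x| ≤ (l1 f : ℤ) := le_trans h1 h2
  rw [Int.abs_eq_natAbs] at h4
  exact_mod_cast h4

lemma psum_supp_bound {f : MB} {r : ℕ} (hχ : chi f = 0)
    (hs : ∀ y, ev f y ≠ 0 → y.natAbs ≤ r) :
    ∀ x, psum f x ≠ 0 → x.natAbs ≤ r := by
  intro x hx
  by_contra hc
  push_neg at hc
  have hcases : (r : ℤ) < x ∨ x < -(r : ℤ) := by omega
  rcases hcases with h | h
  · refine hx (psum_zero_of_big fun y hy => ?_)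
    have := hs y (mem_suppF.1 hy)
    omega
  · refine hx (?_ : psum f x = 0)
    rw [psum_eq_chi_of_small fun y hy => ?_, hχ]
    have := hs y (mem_suppF.1 hy)
    omega

lemma psum_supp_finite (f : MB) (hχ : chi f = 0) : {x : ℤ | psum f x ≠ 0}.Finite := by
  set r := (suppF f).sup Int.natAbs with hr
  have hs : ∀ y, ev f y ≠ 0 → y.natAbs ≤ r := fun y hy => Finset.le_sup (mem_suppF.2 hy)
  refine (Set.finite_Icc (-(r : ℤ)) (r : ℤ)).subset fun x hx => ?_
  have := psum_supp_bound hχ hs x hx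
  simp only [Set.mem_Icc]
  omega

/-- Inverse of `Psib` on elements with total sum zero. -/
noncomputable def Pinv (f : MB) (h : {x : ℤ | psum f x ≠ 0}.Finite) : MB :=
  ⟨fun x => Multiplicative.ofAdd (psum f (Multiplicative.toAdd x)), by
    have hsub : Function.mulSupport (fun x : Mℤ => Multiplicative.ofAdd (psum f (Multiplicative.toAdd x)))
        ⊆ (fun x : Mℤ => Multiplicative.toAdd x) ⁻¹' {x : ℤ | psum f x ≠ 0} := by
      intro x hx
      simp only [Function.mem_mulSupport] at hx
      simp only [Set.mem_preimage, Set.mem_setOf_eq]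
      intro hc
      exact hx (by rw [hc]; rfl)
    exact (h.preimage (Set.injOn_of_injective (fun a b hab => by
      simpa using congrArg Multiplicative.ofAdd hab))).subset hsub⟩

lemma ev_Pinv (f : MB) (h : {x : ℤ | psum f x ≠ 0}.Finite) (x : ℤ) :
    ev (Pinv f h) x = psum f x := rfl

lemma chi_inv (f : MB) : chi f⁻¹ = -chi f := by
  have h : suppF f⁻¹ = suppF f := by ext x; simp
  rw [chi, chi, h, ← Finset.sum_neg_distrib]
  exact Finset.sum_congr rfl fun x _ => by simp

lemma chi_Psib (f : MB) : chi (Psib f) = 0 := by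
  show chi (f * (sh 1 f)⁻¹) = 0
  rw [chi_mul, chi_inv, chi_sh]
  ring

lemma Psib_Pinv {f : MB} (hχ : chi f = 0) :
    Psib (Pinv f (psum_supp_finite f hχ)) = f := by
  apply ev_ext
  intro x
  rw [ev_Psib, ev_Pinv, ev_Pinv]
  have := psum_rec f x
  omega

/-- One step of the inverse bound. -/
lemma inverse_bound {p f : MB} {r M : ℕ} (hpf : Psib p = f)
    (hsupp : ∀ x, ev f x ≠ 0 → x.natAbs ≤ r) (hl1 : l1 f ≤ M) :
    (∀ x, ev p x ≠ 0 → x.natAbs ≤ r) ∧ l1 p ≤ (2 * r + 1) * M := by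
  have hχ : chi f = 0 := hpf ▸ chi_Psib p
  have hpq : p = Pinv f (psum_supp_finite f hχ) := Psib_injective (by rw [hpf, Psib_Pinv hχ])
  have hev : ∀ x, ev p x = psum f x := fun x => by rw [hpq, ev_Pinv]
  have hsp : ∀ x, ev p x ≠ 0 → x.natAbs ≤ r := by
    intro x hx
    rw [hev] at hx
    exact psum_supp_bound hχ hsupp x hx
  refine ⟨hsp, ?_⟩
  have hsub : suppF p ⊆ Finset.Icc (-(r : ℤ)) (r : ℤ) := by
    intro x hx
    have := hsp x (mem_suppF.1 hx)
    simp only [Finset.mem_Icc]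
    omega
  rw [l1_eq_sum hsub]
  have hcard : (Finset.Icc (-(r : ℤ)) (r : ℤ)).card = 2 * r + 1 := by
    rw [Int.card_Icc]
    omega
  calc ∑ x ∈ Finset.Icc (-(r : ℤ)) (r : ℤ), (ev p x).natAbs
      ≤ ∑ _x ∈ Finset.Icc (-(r : ℤ)) (r : ℤ), M := by
        refine Finset.sum_le_sum fun x _ => ?_
        rw [hev]
        exact (psum_natAbs_le f x).trans hl1
    _ = (2 * r + 1) * M := by rw [Finset.sum_const, hcard, smul_eq_mul]

/-- Iterated inverse bound. -/
lemma inverse_bound_iter (n : ℕ) : ∀ {p f : MB} {r M : ℕ}, PsibPow n p = f →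
    (∀ x, ev f x ≠ 0 → x.natAbs ≤ r) → l1 f ≤ M →
    (∀ x, ev p x ≠ 0 → x.natAbs ≤ r) ∧ l1 p ≤ (2 * r + 1) ^ n * M := by
  induction n with
  | zero =>
    intro p f r M hpf hsupp hl1
    have : p = f := hpf
    subst this
    exact ⟨hsupp, by simpa using hl1⟩
  | succ n ih =>
    intro p f r M hpf hsupp hl1
    have hstep : PsibPow n (Psib p) = f := hpf
    obtain ⟨h1, h2⟩ := ih hstep hsupp hl1
    obtain ⟨h3, h4⟩ := inverse_bound rfl h1 h2
    refine ⟨h3, ?_⟩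
    calc l1 p ≤ (2 * r + 1) * ((2 * r + 1) ^ n * M) := h4
      _ = (2 * r + 1) ^ (n + 1) * M := by ring

end AuxPsum

section AuxWitness

open Multiplicative SemidirectProduct

lemma ev_prod {ι : Type*} (s : Finset ι) (g : ι → MB) (x : ℤ) :
    ev (∏ j ∈ s, g j) x = ∑ j ∈ s, ev (g j) x := by
  classical
  induction s using Finset.cons_induction with
  | empty => simp
  | cons a s ha ih => rw [Finset.prod_cons, Finset.sum_cons, ev_mul, ih]

lemma chi_prod {ι : Type*} (s : Finset ι) (g : ι → MB) :
    chi (∏ j ∈ s, g j) = ∑ j ∈ s, chi (g j) := by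
  classical
  induction s using Finset.cons_induction with
  | empty => simp
  | cons a s ha ih => rw [Finset.prod_cons, Finset.sum_cons, chi_mul, ih]

/-- The spreading homomorphism `f ↦ ∏_{j<l} shift_j f`. -/
noncomputable def Theta (l : ℕ) : MB →* MB where
  toFun f := ∏ j ∈ Finset.range l, sh (j : ℤ) f
  map_one' := by simp
  map_mul' f g := by
    apply ev_ext
    intro x
    rw [ev_prod, ev_mul, ev_prod, ev_prod, ← Finset.sum_add_distrib]
    exact Finset.sum_congr rfl fun j _ => by rw [ev_sh, ev_mul, ev_sh, ev_sh]

lemma ev_Theta (l : ℕ) (f : MB) (x : ℤ) :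
    ev (Theta l f) x = ∑ j ∈ Finset.range l, ev f (x + (j : ℤ)) := by
  show ev (∏ j ∈ Finset.range l, sh (j : ℤ) f) x = _
  rw [ev_prod]
  exact Finset.sum_congr rfl fun j _ => by rw [ev_sh]

lemma chi_Theta (l : ℕ) (f : MB) : chi (Theta l f) = l * chi f := by
  calc chi (Theta l f) = ∑ j ∈ Finset.range l, chi (sh (j : ℤ) f) :=
        chi_prod (Finset.range l) (fun j => sh (j : ℤ) f)
    _ = ∑ _j ∈ Finset.range l, chi f := Finset.sum_congr rfl fun j _ => chi_sh _ f
    _ = l * chi f := by rw [Finset.sum_const, Finset.card_range, nsmul_eq_mul]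

lemma Psib_Theta (l : ℕ) (f : MB) : Psib (Theta l f) = f * (sh (l : ℤ) f)⁻¹ := by
  apply ev_ext
  intro x
  rw [ev_Psib, ev_Theta, ev_Theta, ev_mul, ev_inv, ev_sh]
  have hre : ∑ j ∈ Finset.range l, ev f (x + 1 + (j : ℤ))
      = ∑ j ∈ Finset.range l, ev f (x + ((j + 1 : ℕ) : ℤ)) := by
    refine Finset.sum_congr rfl fun j _ => ?_
    congr 1
    push_cast
    ring
  rw [hre]
  have := Finset.sum_range_sub' (fun j : ℕ => ev f (x + (j : ℤ))) l
  simp only [Nat.cast_zero, add_zero] at this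
  calc (∑ j ∈ Finset.range l, ev f (x + (j : ℤ)))
        - ∑ j ∈ Finset.range l, ev f (x + ((j + 1 : ℕ) : ℤ))
      = ∑ j ∈ Finset.range l, (ev f (x + (j : ℤ)) - ev f (x + ((j + 1 : ℕ) : ℤ))) := by
        rw [Finset.sum_sub_distrib]
    _ = ev f x - ev f (x + (l : ℤ)) := this
    _ = ev f x + -ev f (x + (l : ℤ)) := by ring

/-- The witness elements (in `H`-coordinates). -/
noncomputable def witQ (l : ℕ) : ℕ → MB
  | 0 => sing 0 (l : ℤ)
  | n + 1 => Theta l (witQ l n)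

/-- The witness elements (in `G`-coordinates). -/
noncomputable def witF (l : ℕ) : ℕ → MB
  | 0 => sing 0 (l : ℤ)
  | n + 1 => witF l n * (sh (l : ℤ) (witF l n))⁻¹

lemma PsibPow_witQ (l : ℕ) (n : ℕ) : PsibPow n (witQ l n) = witF l n := by
  induction n with
  | zero => rfl
  | succ n ih =>
    show PsibPow n (Psib (Theta l (witQ l n))) = _
    rw [Psib_Theta, map_mul, map_inv, PsibPow_sh, ih]
    rfl

lemma chi_witQ (l : ℕ) (n : ℕ) : chi (witQ l n) = (l : ℤ) ^ n * l := by
  induction n with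
  | zero => show chi (sing 0 (l:ℤ)) = _; rw [chi_sing]; ring
  | succ n ih =>
    show chi (Theta l (witQ l n)) = _
    rw [chi_Theta, ih]
    ring

lemma wl_witF (l : ℕ) (n : ℕ) : wordLength Tstd (inl (witF l n)) ≤ 4 ^ n * l := by
  induction n with
  | zero =>
    show wordLength Tstd (inl (sing 0 (l:ℤ))) ≤ _
    have := wl_inl_sing_le 0 (l : ℤ)
    simpa using this
  | succ n ih =>
    show wordLength Tstd (inl (witF l n * (sh (l : ℤ) (witF l n))⁻¹)) ≤ _
    have hconj : (inl (sh (l : ℤ) (witF l n)) : ZwrZ)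
        = inr (Multiplicative.ofAdd (l : ℤ)) * inl (witF l n)
          * inr ((Multiplicative.ofAdd (l:ℤ))⁻¹) := inl_aut _ _
    have repB : Rep Tstd (inr (Multiplicative.ofAdd (l:ℤ)) : ZwrZ) := by
      rw [← bZ_zpow]; exact rep_zpow (rep_mem bZ_mem_Tstd) _
    have repBinv : Rep Tstd (inr ((Multiplicative.ofAdd (l:ℤ))⁻¹) : ZwrZ) := by
      rw [← ofAdd_neg, ← bZ_zpow]; exact rep_zpow (rep_mem bZ_mem_Tstd) _
    have wlB : wordLength Tstd (inr (Multiplicative.ofAdd (l:ℤ)) : ZwrZ) ≤ l := by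
      simpa using wl_inr_le (l:ℤ)
    have wlBinv : wordLength Tstd (inr ((Multiplicative.ofAdd (l:ℤ))⁻¹) : ZwrZ) ≤ l := by
      rw [← ofAdd_neg]
      simpa using wl_inr_le (-(l:ℤ))
    have h1 : wordLength Tstd (inl (sh (l : ℤ) (witF l n))) ≤ l + (4 ^ n * l) + l := by
      rw [hconj]
      have hmul2 := wordLength_mul_le repB (rep_inl (witF l n))
      have hmul := wordLength_mul_le (rep_mul repB (rep_inl (witF l n))) repBinv
      have := ih
      omega
    have h2 : wordLength Tstd ((inl (sh (l : ℤ) (witF l n)) : ZwrZ))⁻¹ ≤ l + (4 ^ n * l) + l :=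
      le_trans (wordLength_inv_le (rep_inl _)) h1
    rw [map_mul, map_inv]
    refine le_trans (wordLength_mul_le (rep_inl _) (rep_inv (rep_inl _))) ?_
    have hpow : 0 < 4 ^ n := Nat.pow_pos (by norm_num)
    have hcl : l ≤ 4 ^ n * l := Nat.le_mul_of_pos_left l hpow
    have h3 : 4 ^ (n + 1) * l = 4 * (4 ^ n * l) := by ring
    have := ih
    omega

lemma chihom_gen_bound : ∀ t ∈ Tstd, (Multiplicative.toAdd (chihom t)).natAbs ≤ 1 := by
  intro t ht
  simp only [Tstd, Set.mem_insert_iff, Set.mem_singleton_iff] at ht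
  rcases ht with rfl | rfl
  · rw [aZ_eq, chihom_inl, chi_sing]
    simp
  · rw [bZ_eq, chihom_inr]
    simp

lemma wl_witQ_lb (l : ℕ) (n : ℕ) : l ^ (n + 1) ≤ wordLength Tstd (inl (witQ l n)) := by
  have h := natAbs_le_wordLength chihom chihom_gen_bound (rep_std (inl (witQ l n)))
  have h2 : chihom (inl (witQ l n)) = Multiplicative.ofAdd ((l : ℤ) ^ n * l) := by
    rw [chihom_inl, chi_witQ]
  rw [h2] at h
  have h3 : (Multiplicative.toAdd (Multiplicative.ofAdd ((l : ℤ) ^ n * l))).natAbs = l ^ (n + 1) := by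
    have : ((l : ℤ) ^ n * l) = ((l ^ (n + 1) : ℕ) : ℤ) := by push_cast; ring
    rw [toAdd_ofAdd, this, Int.natAbs_natCast]
  rwa [h3] at h

end AuxWitness

section AuxSubgroup

open Multiplicative SemidirectProduct

lemma inl_commutator (f : MB) : ⁅(inl f : ZwrZ), bZ⁆ = inl (Psib f) := by
  rw [commutatorElement_def, bZ_eq]
  calc inl f * inr (Multiplicative.ofAdd (1:ℤ)) * (inl f)⁻¹ * (inr (Multiplicative.ofAdd (1:ℤ)))⁻¹
      = inl f * (inr (Multiplicative.ofAdd (1:ℤ)) * inl f⁻¹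
          * inr ((Multiplicative.ofAdd (1:ℤ))⁻¹)) := by
        rw [← map_inv inl, ← map_inv inr]
        group
    _ = inl f * inl (wreathAction Mℤ Mℤ (Multiplicative.ofAdd (1:ℤ)) f⁻¹) := by rw [inl_aut]
    _ = inl (f * (sh 1 f)⁻¹) := by
        rw [← map_mul]
        congr 1
    _ = inl (Psib f) := rfl

lemma iterC_eq (n : ℕ) : iterC n = inl (PsibPow n (sing 0 1)) := by
  induction n with
  | zero => exact aZ_eq
  | succ n ih =>
    show ⁅iterC n, bZ⁆ = _
    rw [ih, inl_commutator, ← PsibPow_succ']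

lemma Phid_aZ (n : ℕ) : Phid n aZ = iterC n := by
  rw [aZ_eq, iterC_eq]
  exact SemidirectProduct.map_inl _ _ _ _

lemma Phid_bZ (n : ℕ) : Phid n bZ = bZ := by
  rw [bZ_eq]
  exact SemidirectProduct.map_inr _ _ _ _

lemma closure_eq_range (n : ℕ) :
    Subgroup.closure {bZ, iterC n} = (Phid n).range := by
  rw [MonoidHom.range_eq_map, ← closure_Tstd, MonoidHom.map_closure]
  congr 1
  have h : Phid n '' Tstd = {Phid n aZ, Phid n bZ} := by
    rw [Tstd, Set.image_insert_eq, Set.image_singleton]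
  rw [h, Phid_aZ, Phid_bZ, Set.pair_comm]

lemma bZ_mem_closure (n : ℕ) : bZ ∈ Subgroup.closure {bZ, iterC n} :=
  Subgroup.subset_closure (by simp)

lemma iterC_mem_closure (n : ℕ) : iterC n ∈ Subgroup.closure {bZ, iterC n} :=
  Subgroup.subset_closure (by simp)

/-- The isomorphism of `H_m` with `ℤ wr ℤ`. -/
noncomputable def eIso (n : ℕ) : ↥(Subgroup.closure {bZ, iterC n}) ≃* ZwrZ :=
  (MulEquiv.subgroupCongr (closure_eq_range n)).trans
    (MonoidHom.ofInjective (Phid_injective n)).symm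

lemma Phid_eIso (n : ℕ) (h : ↥(Subgroup.closure {bZ, iterC n})) :
    Phid n (eIso n h) = (h : ZwrZ) := by
  show Phid n ((MonoidHom.ofInjective (Phid_injective n)).symm
    (MulEquiv.subgroupCongr (closure_eq_range n) h)) = _
  rw [MonoidHom.apply_ofInjective_symm]
  rfl

lemma eIso_bZ (n : ℕ) : eIso n ⟨bZ, bZ_mem_closure n⟩ = bZ := by
  apply Phid_injective n
  rw [Phid_eIso, Phid_bZ]

lemma eIso_iterC (n : ℕ) : eIso n ⟨iterC n, iterC_mem_closure n⟩ = aZ := by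
  apply Phid_injective n
  rw [Phid_eIso, Phid_aZ]

lemma range_Phid_one : (Phid 1).range = chihom.ker := by
  ext x
  constructor
  · rintro ⟨y, rfl⟩
    have h : chihom (Phid 1 y) = Multiplicative.ofAdd (chi (Psib y.left)) := by
      rw [chihom_apply]
      rfl
    rw [MonoidHom.mem_ker, h, chi_Psib]
    rfl
  · intro hx
    rw [MonoidHom.mem_ker, chihom_apply] at hx
    have hχ : chi x.left = 0 := by
      have := congrArg Multiplicative.toAdd hx
      simpa using this
    refine ⟨⟨Pinv x.left (psum_supp_finite _ hχ), x.right⟩, ?_⟩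
    refine SemidirectProduct.ext ?_ rfl
    show PsibPow 1 (Pinv x.left (psum_supp_finite _ hχ)) = x.left
    show Psib (Pinv x.left (psum_supp_finite _ hχ)) = x.left
    exact Psib_Pinv hχ

lemma closure_H2_normal : (Subgroup.closure {bZ, iterC 1}).Normal := by
  rw [closure_eq_range 1, range_Phid_one]
  exact MonoidHom.normal_ker chihom

lemma range_Phid_mono (k : ℕ) : (Phid (k + 1)).range ≤ (Phid k).range := by
  rintro x ⟨y, rfl⟩
  exact ⟨Phid 1 y, (Phid_succ k y).symm⟩

lemma range_Phid_conj (k : ℕ) :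
    ∀ x ∈ (Phid k).range, ∀ h ∈ (Phid (k + 1)).range,
      x * h * x⁻¹ ∈ (Phid (k + 1)).range := by
  rintro x ⟨w, rfl⟩ h ⟨v, rfl⟩
  have h1 : Phid (k + 1) v = Phid k (Phid 1 v) := Phid_succ k v
  have h2 : Phid 1 v ∈ chihom.ker := by
    rw [← range_Phid_one]
    exact ⟨v, rfl⟩
  have h3 : w * Phid 1 v * w⁻¹ ∈ chihom.ker := by
    haveI : chihom.ker.Normal := MonoidHom.normal_ker chihom
    exact Subgroup.Normal.conj_mem this _ h2 w
  rw [← range_Phid_one] at h3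
  obtain ⟨u, hu⟩ := h3
  refine ⟨u, ?_⟩
  rw [Phid_succ k u, hu, map_mul, map_mul, map_inv, ← Phid_succ]

lemma subnormal_closure (n : ℕ) : IsSubnormal (Subgroup.closure {bZ, iterC n}) := by
  refine ⟨n, fun i => (Phid (n - i)).range, ?_, ?_, ?_⟩
  · show (Phid (n - 0)).range = _
    rw [Nat.sub_zero, closure_eq_range]
  · show (Phid (n - n)).range = ⊤
    rw [Nat.sub_self]
    rw [Subgroup.eq_top_iff']
    exact fun x => ⟨x, Phid_zero x⟩
  · intro i hi
    have hsub : n - i = (n - (i + 1)) + 1 := by omega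
    constructor
    · show (Phid (n - i)).range ≤ (Phid (n - (i + 1))).range
      rw [hsub]
      exact range_Phid_mono _
    · intro x hx h hh
      have hx' : x ∈ (Phid (n - (i + 1))).range := hx
      have hh' : h ∈ (Phid (n - i)).range := hh
      show x * h * x⁻¹ ∈ (Phid (n - i)).range
      rw [hsub] at hh' ⊢
      exact range_Phid_conj _ x hx' h hh'

end AuxSubgroup

section AuxDistortion

open Multiplicative SemidirectProduct

/-- `H_m`, abbreviated. -/
noncomputable abbrev HH (n : ℕ) : Subgroup ZwrZ := Subgroup.closure {bZ, iterC n}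

/-- The standard generating set of `H_m`. -/
noncomputable def Sstd (n : ℕ) : Set ↥(HH n) :=
  {⟨bZ, bZ_mem_closure n⟩, ⟨iterC n, iterC_mem_closure n⟩}

lemma Sstd_finite (n : ℕ) : (Sstd n).Finite :=
  (Set.finite_singleton _).insert _

lemma eIso_gen (n : ℕ) : ∀ t ∈ Sstd n, eIso n t ∈ Tstd ∪ Tstd⁻¹ := by
  intro t ht
  rcases ht with rfl | ht
  · rw [eIso_bZ]
    exact Or.inl bZ_mem_Tstd
  · rw [Set.mem_singleton_iff] at ht
    subst ht
    rw [eIso_iterC]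
    exact Or.inl aZ_mem_Tstd

lemma eIso_symm_gen (n : ℕ) : ∀ t ∈ Tstd, (eIso n).symm t ∈ Sstd n ∪ (Sstd n)⁻¹ := by
  intro t ht
  rcases ht with rfl | ht
  · have : (eIso n).symm aZ = ⟨iterC n, iterC_mem_closure n⟩ := by
      rw [← eIso_iterC n, MulEquiv.symm_apply_apply]
    refine Or.inl ?_
    simp only [Sstd, Set.mem_insert_iff, Set.mem_singleton_iff]
    exact Or.inr this
  · rw [Set.mem_singleton_iff] at ht
    subst ht
    have : (eIso n).symm bZ = ⟨bZ, bZ_mem_closure n⟩ :=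
      (MulEquiv.symm_apply_eq (eIso n)).2 (eIso_bZ n).symm
    refine Or.inl ?_
    simp only [Sstd, Set.mem_insert_iff, Set.mem_singleton_iff]
    exact Or.inl this

lemma rep_Sstd (n : ℕ) (h : ↥(HH n)) : Rep (Sstd n) h := by
  have h1 : Rep Tstd (eIso n h) := rep_std _
  have h2 := rep_map ((eIso n).symm.toMonoidHom) (eIso_symm_gen n) h1
  simpa using h2

lemma wlS_eq (n : ℕ) (h : ↥(HH n)) :
    wordLength (Sstd n) h = wordLength Tstd (eIso n h) := by
  refine le_antisymm ?_ ?_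
  · have h1 := wordLength_map_le ((eIso n).symm.toMonoidHom) (eIso_symm_gen n)
      (rep_std (eIso n h))
    simpa using h1
  · exact wordLength_map_le ((eIso n).toMonoidHom) (eIso_gen n) (rep_Sstd n h)

lemma distortion_le {Γ : Type*} [Group Γ] (T : Set Γ) (H : Subgroup Γ) (S : Set H)
    {l D : ℕ} (h : ∀ x : H, wordLength T (x : Γ) ≤ l → wordLength S x ≤ D) :
    distortion T H S l ≤ D := by
  rw [distortion]
  by_cases hne : (wordLength S '' {x : H | wordLength T (x : Γ) ≤ l}).Nonempty
  · refine csSup_le hne ?_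
    rintro d ⟨x, hx, rfl⟩
    exact h x hx
  · rw [Set.not_nonempty_iff_eq_empty.1 hne]
    rw [csSup_empty]
    exact Nat.zero_le D

lemma le_distortion {Γ : Type*} [Group Γ] {T : Set Γ} {H : Subgroup Γ} (S : Set H)
    {l : ℕ} (hT : T.Finite) (hrep : ∀ g : Γ, Rep T g) (x : H)
    (hx : wordLength T (x : Γ) ≤ l) :
    wordLength S x ≤ distortion T H S l := by
  have hball : {y : H | wordLength T (y : Γ) ≤ l}.Finite := by
    have hG := ball_finite hT hrep l
    have : {y : H | wordLength T (y : Γ) ≤ l}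
        = (Subtype.val : H → Γ) ⁻¹' {g : Γ | wordLength T g ≤ l} := rfl
    rw [this]
    exact hG.preimage (Set.injOn_of_injective Subtype.val_injective)
  have hbdd : BddAbove (wordLength S '' {y : H | wordLength T (y : Γ) ≤ l}) :=
    (hball.image _).bddAbove
  exact le_csSup hbdd ⟨x, hx, rfl⟩

end AuxDistortion

section AuxFinal

open Multiplicative SemidirectProduct

lemma eIso_zero (x : ↥(HH 0)) : eIso 0 x = (x : ZwrZ) :=
  (Phid_zero _).symm.trans (Phid_eIso 0 x)

lemma core_upper (n : ℕ) (x : ↥(HH n)) (r : ℕ)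
    (hr : wordLength Tstd ((x : ZwrZ)) ≤ r) :
    wordLength Tstd (eIso n x) ≤ (2 * r + 1) ^ n * r + (2 * r + 1) * (2 * r) + r := by
  obtain ⟨hsupp, hright, hl1⟩ := bounds_of_wordLength hr
  set g := eIso n x with hg
  have hPg : Phid n g = (x : ZwrZ) := Phid_eIso n x
  have hleft : PsibPow n g.left = (x : ZwrZ).left := by rw [← hPg]; rfl
  have hright2 : g.right = (x : ZwrZ).right := by rw [← hPg]; rfl
  obtain ⟨hqs, hql⟩ := inverse_bound_iter n hleft hsupp hl1
  have hsubI : suppF g.left ⊆ Finset.Icc (-(r : ℤ)) (r : ℤ) := by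
    intro y hy
    have := hqs y (mem_suppF.1 hy)
    simp only [Finset.mem_Icc]
    omega
  have hcard : (suppF g.left).card ≤ 2 * r + 1 := by
    have h1 := Finset.card_le_card hsubI
    have h2 : (Finset.Icc (-(r : ℤ)) (r : ℤ)).card = 2 * r + 1 := by
      rw [Int.card_Icc]; omega
    omega
  have h1 : wordLength Tstd (inl g.left) ≤ (2 * r + 1) * (2 * r) + (2 * r + 1) ^ n * r := by
    refine le_trans (wl_inl_le g.left) ?_
    have hsplit : ∑ y ∈ suppF g.left, (2 * y.natAbs + (ev g.left y).natAbs)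
        = (∑ y ∈ suppF g.left, 2 * y.natAbs) + ∑ y ∈ suppF g.left, (ev g.left y).natAbs :=
      Finset.sum_add_distrib
    rw [hsplit]
    refine Nat.add_le_add ?_ ?_
    · calc ∑ y ∈ suppF g.left, 2 * y.natAbs ≤ ∑ _y ∈ suppF g.left, 2 * r := by
            refine Finset.sum_le_sum fun y hy => ?_
            have := hqs y (mem_suppF.1 hy)
            omega
        _ = (suppF g.left).card * (2 * r) := by rw [Finset.sum_const, smul_eq_mul]
        _ ≤ (2 * r + 1) * (2 * r) := Nat.mul_le_mul_right _ hcard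
    · exact hql
  have h2 : (Multiplicative.toAdd g.right).natAbs ≤ r := by rw [hright2]; exact hright
  have h3 := wl_pair_le g
  omega

lemma core_upper2 (n : ℕ) (x : ↥(HH n)) (r : ℕ) (hr1 : 1 ≤ r)
    (hr : wordLength Tstd ((x : ZwrZ)) ≤ r) :
    wordLength Tstd (eIso n x) ≤ (3 ^ n + 7) * r ^ (n + 1) := by
  cases n with
  | zero =>
    rw [eIso_zero]
    calc wordLength Tstd ((x : ZwrZ)) ≤ r := hr
      _ ≤ (3 ^ 0 + 7) * r ^ (0 + 1) := by rw [pow_zero, pow_one]; omega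
  | succ k =>
    have hB := core_upper (k + 1) x r hr
    have h3r : 2 * r + 1 ≤ 3 * r := by omega
    have hpow1 : (2 * r + 1) ^ (k + 1) ≤ (3 * r) ^ (k + 1) := Nat.pow_le_pow_left h3r _
    have hpow2 : (3 * r) ^ (k + 1) = 3 ^ (k + 1) * r ^ (k + 1) := mul_pow 3 r (k + 1)
    have ht1 : (2 * r + 1) ^ (k + 1) * r ≤ 3 ^ (k + 1) * r ^ (k + 2) := by
      calc (2 * r + 1) ^ (k + 1) * r ≤ 3 ^ (k + 1) * r ^ (k + 1) * r := by
            rw [← hpow2]; exact Nat.mul_le_mul_right r hpow1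
        _ = 3 ^ (k + 1) * r ^ (k + 2) := by ring
    have hr2 : r ^ 2 ≤ r ^ (k + 2) := Nat.pow_le_pow_right hr1 (by omega)
    have ht2 : (2 * r + 1) * (2 * r) ≤ 6 * r ^ (k + 2) := by
      calc (2 * r + 1) * (2 * r) ≤ (3 * r) * (2 * r) := Nat.mul_le_mul_right _ h3r
        _ = 6 * r ^ 2 := by ring
        _ ≤ 6 * r ^ (k + 2) := Nat.mul_le_mul_left 6 hr2
    have ht3 : r ≤ r ^ (k + 2) := by
      calc r = r ^ 1 := (pow_one r).symm
        _ ≤ r ^ (k + 2) := Nat.pow_le_pow_right hr1 (by omega)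
    calc wordLength Tstd (eIso (k + 1) x)
        ≤ (2 * r + 1) ^ (k + 1) * r + (2 * r + 1) * (2 * r) + r := hB
      _ ≤ 3 ^ (k + 1) * r ^ (k + 2) + 6 * r ^ (k + 2) + r ^ (k + 2) := by omega
      _ = (3 ^ (k + 1) + 7) * r ^ (k + 2) := by ring

lemma distortion_equiv (n : ℕ) (T : Set ZwrZ) (S : Set ↥(HH n))
    (hTfin : T.Finite) (hTtop : Subgroup.closure T = ⊤)
    (hSfin : S.Finite) (hStop : Subgroup.closure S = ⊤) :
    DistEquiv (distortion T (HH n) S) (fun l => l ^ (n + 1)) := by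
  have hrepT : ∀ g : ZwrZ, Rep T g := rep_all_of_closure_eq_top hTtop
  have hrepS : ∀ x : ↥(HH n), Rep S x := rep_all_of_closure_eq_top hStop
  obtain ⟨C₁, hC₁p, hC₁⟩ := exists_comparison hrepT Tstd_finite
  obtain ⟨C₂, hC₂p, hC₂⟩ := exists_comparison rep_std hTfin
  obtain ⟨C₃, hC₃p, hC₃⟩ := exists_comparison hrepS (Sstd_finite n)
  obtain ⟨C₄, hC₄p, hC₄⟩ := exists_comparison (rep_Sstd n) hSfin
  constructor
  · -- upper bound
    set C : ℕ := C₃ * (3 ^ n + 7) + C₂ + 1 with hC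
    refine ⟨C, by omega, fun l => ?_⟩
    refine distortion_le T _ S fun x hx => ?_
    by_cases hl : l = 0
    · subst hl
      have hx0 : wordLength T ((x : ZwrZ)) = 0 := Nat.le_zero.1 hx
      have hx1 : (x : ZwrZ) = 1 := wordLength_eq_zero (hrepT _) hx0
      have hx2 : x = 1 := Subtype.ext (hx1.trans rfl)
      rw [hx2, wordLength_one]
      exact Nat.zero_le _
    · have hr : wordLength Tstd ((x : ZwrZ)) ≤ C₂ * l := by
        calc wordLength Tstd ((x : ZwrZ)) ≤ C₂ * wordLength T ((x : ZwrZ)) :=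
              hC₂ _ (hrepT _)
          _ ≤ C₂ * l := Nat.mul_le_mul_left C₂ hx
      have hr1 : 1 ≤ C₂ * l := by
        have : 1 ≤ l := Nat.one_le_iff_ne_zero.2 hl
        exact Nat.one_le_iff_ne_zero.2 (by positivity)
      have hcore := core_upper2 n x (C₂ * l) hr1 hr
      have hS : wordLength S x ≤ C₃ * ((3 ^ n + 7) * (C₂ * l) ^ (n + 1)) := by
        calc wordLength S x ≤ C₃ * wordLength (Sstd n) x := hC₃ x (rep_Sstd n x)
          _ = C₃ * wordLength Tstd (eIso n x) := by rw [wlS_eq]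
          _ ≤ C₃ * ((3 ^ n + 7) * (C₂ * l) ^ (n + 1)) := Nat.mul_le_mul_left C₃ hcore
      have hfin : C₃ * ((3 ^ n + 7) * (C₂ * l) ^ (n + 1)) ≤ C * (C * l) ^ (n + 1) := by
        have hp1 : (C₂ * l) ^ (n + 1) ≤ (C * l) ^ (n + 1) := by
          refine Nat.pow_le_pow_left ?_ _
          exact Nat.mul_le_mul_right l (by omega)
        calc C₃ * ((3 ^ n + 7) * (C₂ * l) ^ (n + 1))
            = (C₃ * (3 ^ n + 7)) * (C₂ * l) ^ (n + 1) := by ring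
          _ ≤ (C₃ * (3 ^ n + 7)) * (C * l) ^ (n + 1) := Nat.mul_le_mul_left _ hp1
          _ ≤ C * (C * l) ^ (n + 1) := Nat.mul_le_mul_right _ (by omega)
      exact le_trans hS hfin
  · -- lower bound
    set C : ℕ := C₁ * 4 ^ n + C₄ + 1 with hC
    refine ⟨C, by omega, fun l => ?_⟩
    have hmem : Phid n (inl (witQ l n)) ∈ HH n := by
      show Phid n (inl (witQ l n)) ∈ Subgroup.closure {bZ, iterC n}
      rw [closure_eq_range n]
      exact ⟨_, rfl⟩
    set x : ↥(HH n) := ⟨Phid n (inl (witQ l n)), hmem⟩ with hxdef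
    have hx1 : Phid n (inl (witQ l n)) = inl (witF l n) := by
      rw [Phid_inl, PsibPow_witQ]
    have hwlT : wordLength T ((x : ZwrZ)) ≤ C * l := by
      calc wordLength T ((x : ZwrZ)) ≤ C₁ * wordLength Tstd ((x : ZwrZ)) :=
            hC₁ _ (rep_std _)
        _ ≤ C₁ * (4 ^ n * l) := by
            refine Nat.mul_le_mul_left C₁ ?_
            show wordLength Tstd (Phid n (inl (witQ l n))) ≤ 4 ^ n * l
            rw [hx1]
            exact wl_witF l n
        _ ≤ C * l := by
            calc C₁ * (4 ^ n * l) = (C₁ * 4 ^ n) * l := by ring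
              _ ≤ C * l := Nat.mul_le_mul_right l (by omega)
    have heIso : eIso n x = inl (witQ l n) := by
      apply Phid_injective n
      rw [Phid_eIso]
    have hlb : l ^ (n + 1) ≤ wordLength (Sstd n) x := by
      rw [wlS_eq, heIso]
      exact wl_witQ_lb l n
    have hd : wordLength S x ≤ distortion T (HH n) S (C * l) :=
      le_distortion S hTfin hrepT x hwlT
    calc l ^ (n + 1) ≤ wordLength (Sstd n) x := hlb
      _ ≤ C₄ * wordLength S x := hC₄ x (hrepS x)
      _ ≤ C₄ * distortion T (HH n) S (C * l) := Nat.mul_le_mul_left C₄ hd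
      _ ≤ C * distortion T (HH n) S (C * l) := Nat.mul_le_mul_right _ (by omega)

end AuxFinal

/-- For every `m ≥ 1`, the subgroup `H_m = ⟨b, c_m⟩` of `ℤ wr ℤ`, where
`c_m` is the `(m-1)`-fold commutator `[⋯[[a,b],b],⋯,b]`, is isomorphic to `ℤ wr ℤ`,
subnormal, and has distortion `≈ l^m`; moreover `H_2 = ⟨b, [a,b]⟩` is normal. -/
theorem statement4 (m : ℕ) (hm : 1 ≤ m) :
    Nonempty (↥(Subgroup.closure {bZ, iterC (m - 1)}) ≃* ZwrZ) ∧
    IsSubnormal (Subgroup.closure {bZ, iterC (m - 1)}) ∧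
    (∀ (T : Set ZwrZ) (S : Set ↥(Subgroup.closure {bZ, iterC (m - 1)})),
      T.Finite → Subgroup.closure T = ⊤ → S.Finite → Subgroup.closure S = ⊤ →
      DistEquiv (distortion T (Subgroup.closure {bZ, iterC (m - 1)}) S) (fun l => l ^ m)) ∧
    (Subgroup.closure {bZ, iterC 1}).Normal := by
  obtain ⟨n, rfl⟩ : ∃ n, m = n + 1 := ⟨m - 1, by omega⟩
  simp only [Nat.add_sub_cancel]
  exact ⟨⟨eIso n⟩, subnormal_closure n, fun T S hTfin hTtop hSfin hStop =>
    distortion_equiv n T S hTfin hTtop hSfin hStop, closure_H2_normal⟩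

end DistortionPaper
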